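/- (Remark 1) Let Q ⊆ ℝ^n be convex, ν ∈ [0,1), L̃ > 0, δ > 0, and let h : ℝ^n → ℝ be differentiable on Q with ‖∇h(x₁) - ∇h(x₂)‖₂ ≤ L̃‖x₁ - x₂‖₂^ν for all x₁, x₂ ∈ Q. Set L = L̃ · ( L̃(1-ν) / (2δ(1+ν)) )^{(1-ν)/(1+ν)}. Then for all x₁, x₂ ∈ Q: h(x₂) ≤ h(x₁) + ⟨∇h(x₁), x₂ - x₁⟩ + (L/2)‖x₂ - x₁‖₂² + δ. -/

import Mathlib

open scoped RealInnerProductSpace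

-- Key algebraic identity, proved via logarithms
lemma aux_key {ν Lt δ : ℝ} (hν0 : 0 ≤ ν) (hν1 : ν < 1) (hLt : 0 < Lt) (hδ : 0 < δ) :
    (Lt / ((1 + ν) * (2 * δ / (1 - ν)) ^ ((1 - ν) / 2))) ^ (2 / (1 + ν)) * (1 + ν)
      = Lt * (Lt * (1 - ν) / (2 * δ * (1 + ν))) ^ ((1 - ν) / (1 + ν)) := by
  have h1ν : (0:ℝ) < 1 + ν := by linarith
  have h2ν : (0:ℝ) < 1 - ν := by linarith
  have hB : (0:ℝ) < (2 * δ / (1 - ν)) ^ ((1 - ν) / 2) :=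
    Real.rpow_pos_of_pos (by positivity) _
  have hc : (0:ℝ) < Lt / ((1 + ν) * (2 * δ / (1 - ν)) ^ ((1 - ν) / 2)) := by positivity
  have hK : (0:ℝ) < Lt * (1 - ν) / (2 * δ * (1 + ν)) := by positivity
  have hLHS : (0:ℝ) < (Lt / ((1 + ν) * (2 * δ / (1 - ν)) ^ ((1 - ν) / 2))) ^ (2 / (1 + ν)) * (1 + ν) := by
    positivity
  have hRHS : (0:ℝ) < Lt * (Lt * (1 - ν) / (2 * δ * (1 + ν))) ^ ((1 - ν) / (1 + ν)) := by
    positivity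
  have hlog : Real.log ((Lt / ((1 + ν) * (2 * δ / (1 - ν)) ^ ((1 - ν) / 2))) ^ (2 / (1 + ν)) * (1 + ν))
      = Real.log (Lt * (Lt * (1 - ν) / (2 * δ * (1 + ν))) ^ ((1 - ν) / (1 + ν))) := by
    rw [Real.log_mul (by positivity) (ne_of_gt h1ν), Real.log_rpow hc,
      Real.log_div (ne_of_gt hLt) (by positivity),
      Real.log_mul (ne_of_gt h1ν) (ne_of_gt hB), Real.log_rpow (by positivity),
      Real.log_div (by positivity) (ne_of_gt h2ν),
      Real.log_mul (ne_of_gt hLt) (ne_of_gt (Real.rpow_pos_of_pos hK _)), Real.log_rpow hK,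
      Real.log_div (by positivity) (by positivity),
      Real.log_mul (ne_of_gt hLt) (ne_of_gt h2ν),
      Real.log_mul (by positivity) (ne_of_gt h1ν)]
    field_simp
    ring
  calc (Lt / ((1 + ν) * (2 * δ / (1 - ν)) ^ ((1 - ν) / 2))) ^ (2 / (1 + ν)) * (1 + ν)
      = Real.exp (Real.log ((Lt / ((1 + ν) * (2 * δ / (1 - ν)) ^ ((1 - ν) / 2))) ^ (2 / (1 + ν)) * (1 + ν))) := (Real.exp_log hLHS).symm
    _ = Real.exp (Real.log (Lt * (Lt * (1 - ν) / (2 * δ * (1 + ν))) ^ ((1 - ν) / (1 + ν)))) := by rw [hlog]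
    _ = _ := Real.exp_log hRHS

-- Scalar inequality via Young's inequality
lemma aux_scalar {ν Lt δ r : ℝ} (hν0 : 0 ≤ ν) (hν1 : ν < 1) (hLt : 0 < Lt) (hδ : 0 < δ)
    (hr : 0 ≤ r) :
    Lt * r ^ (1 + ν) / (1 + ν) ≤
      Lt * (Lt * (1 - ν) / (2 * δ * (1 + ν))) ^ ((1 - ν) / (1 + ν)) / 2 * r ^ (2:ℕ) + δ := by
  have h1ν : (0:ℝ) < 1 + ν := by linarith
  have h2ν : (0:ℝ) < 1 - ν := by linarith
  set p : ℝ := 2 / (1 + ν) with hp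
  set q : ℝ := 2 / (1 - ν) with hq
  have hpq : p.HolderConjugate q := by
    rw [Real.holderConjugate_iff]
    constructor
    · rw [hp]; rw [lt_div_iff₀ h1ν]; linarith
    · rw [hp, hq]; field_simp; ring
  set B : ℝ := (2 * δ / (1 - ν)) ^ ((1 - ν) / 2) with hBdef
  have hB : 0 < B := Real.rpow_pos_of_pos (by positivity) _
  set c : ℝ := Lt / ((1 + ν) * B) with hcdef
  have hc : 0 < c := by positivity
  have young := Real.young_inequality_of_nonneg
    (a := c * r ^ (1 + ν)) (b := B)
    (mul_nonneg hc.le (Real.rpow_nonneg hr _)) hB.le hpq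
  -- a * B = Lt * r^(1+ν) / (1+ν)
  have hab : c * r ^ (1 + ν) * B = Lt * r ^ (1 + ν) / (1 + ν) := by
    rw [hcdef]; field_simp
  -- a^p/p
  have hap : (c * r ^ (1 + ν)) ^ p = c ^ p * r ^ (2:ℕ) := by
    rw [Real.mul_rpow hc.le (Real.rpow_nonneg hr _), ← Real.rpow_natCast r 2,
      ← Real.rpow_mul hr]
    congr 1
    rw [hp]; field_simp
    norm_num
  -- B^q/q = δ
  have hbq : B ^ q / q = δ := by
    rw [hBdef, ← Real.rpow_mul (by positivity)]
    have : (1 - ν) / 2 * q = 1 := by rw [hq]; field_simp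
    rw [this, Real.rpow_one, hq]
    field_simp
  have hkey := aux_key hν0 hν1 hLt hδ
  rw [hab, hap, hbq] at young
  have hcp : c ^ p * r ^ (2:ℕ) / p
      = Lt * (Lt * (1 - ν) / (2 * δ * (1 + ν))) ^ ((1 - ν) / (1 + ν)) / 2 * r ^ (2:ℕ) := by
    rw [← hkey, hcdef, hp]
    field_simp
    ring
  rw [hcp] at young
  exact young

/-- Remark 1: A function with `ν`-Hölder continuous gradient (constant `L̃`,
`ν ∈ [0,1)`) on a convex set `Q` satisfies, for `L = L̃ (L̃(1-ν)/(2δ(1+ν)))^{(1-ν)/(1+ν)}`,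
the inexact quadratic upper bound
`h(x₂) ≤ h(x₁) + ⟪∇h(x₁), x₂ - x₁⟫ + (L/2) ‖x₂ - x₁‖² + δ` on `Q`. -/
theorem stmt_6 {n : ℕ} (Q : Set (EuclideanSpace ℝ (Fin n))) (hQ : Convex ℝ Q)
    (ν : ℝ) (hν : ν ∈ Set.Ico (0 : ℝ) 1)
    (Ltilde δ : ℝ) (hL : 0 < Ltilde) (hδ : 0 < δ)
    (h : EuclideanSpace ℝ (Fin n) → ℝ)
    (h' : EuclideanSpace ℝ (Fin n) → EuclideanSpace ℝ (Fin n))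
    (hdiff : ∀ x ∈ Q, HasGradientAt h (h' x) x)
    (hHolder : ∀ x₁ ∈ Q, ∀ x₂ ∈ Q, ‖h' x₁ - h' x₂‖ ≤ Ltilde * ‖x₁ - x₂‖ ^ ν)
    (L : ℝ)
    (hLdef : L = Ltilde * (Ltilde * (1 - ν) / (2 * δ * (1 + ν))) ^ ((1 - ν) / (1 + ν))) :
    ∀ x₁ ∈ Q, ∀ x₂ ∈ Q,
      h x₂ ≤ h x₁ + ⟪h' x₁, x₂ - x₁⟫ + L / 2 * ‖x₂ - x₁‖ ^ 2 + δ := by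
  obtain ⟨hν0, hν1⟩ := hν
  have h1ν : (0:ℝ) < 1 + ν := by linarith
  intro x₁ hx₁ x₂ hx₂
  by_cases hd0 : x₂ - x₁ = 0
  · have hx : x₂ = x₁ := by rwa [sub_eq_zero] at hd0
    subst hx
    simp only [sub_self, inner_zero_right, norm_zero]
    nlinarith [hδ]
  -- main case
  set d : EuclideanSpace ℝ (Fin n) := x₂ - x₁ with hddef
  have hdn : 0 < ‖d‖ := norm_pos_iff.mpr hd0
  set φ : ℝ → ℝ := fun t =>
    h (x₁ + t • d) - t * ⟪h' x₁, d⟫ - Ltilde * ‖d‖ ^ (1 + ν) / (1 + ν) * t ^ (1 + ν) with hφ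
  have hmem : ∀ t ∈ Set.Icc (0:ℝ) 1, x₁ + t • d ∈ Q := fun t ht =>
    hQ.add_smul_sub_mem hx₁ hx₂ ht
  have hderiv : ∀ t ∈ Set.Icc (0:ℝ) 1, HasDerivAt φ
      (⟪h' (x₁ + t • d) - h' x₁, d⟫ - Ltilde * ‖d‖ ^ (1 + ν) * t ^ ν) t := by
    intro t ht
    have hγ : HasDerivAt (fun s : ℝ => x₁ + s • d) d t := by
      simpa using ((hasDerivAt_id t).smul_const d).const_add x₁
    have hg : HasDerivAt (fun s : ℝ => h (x₁ + s • d)) ⟪h' (x₁ + t • d), d⟫ t := by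
      have := ((hdiff _ (hmem t ht)).hasFDerivAt.comp_hasDerivAt t hγ)
      simp at this
      exact this
    have h1 : HasDerivAt (fun s : ℝ => s * ⟪h' x₁, d⟫) ⟪h' x₁, d⟫ t := by
      simpa using (hasDerivAt_id t).mul_const ⟪h' x₁, d⟫
    have h2 : HasDerivAt (fun s : ℝ => Ltilde * ‖d‖ ^ (1 + ν) / (1 + ν) * s ^ (1 + ν))
        (Ltilde * ‖d‖ ^ (1 + ν) * t ^ ν) t := by
      have := (Real.hasDerivAt_rpow_const (x := t) (p := 1 + ν)
        (Or.inr (by linarith))).const_mul (Ltilde * ‖d‖ ^ (1 + ν) / (1 + ν))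
      have he : Ltilde * ‖d‖ ^ (1 + ν) / (1 + ν) * ((1 + ν) * t ^ (1 + ν - 1))
          = Ltilde * ‖d‖ ^ (1 + ν) * t ^ ν := by
        have : 1 + ν - 1 = ν := by ring
        rw [this]; field_simp
      rw [he] at this
      exact this
    have := (hg.sub h1).sub h2
    exact this.congr_deriv (by rw [inner_sub_left])
  have hanti : AntitoneOn φ (Set.Icc (0:ℝ) 1) := by
    apply antitoneOn_of_deriv_nonpos (convex_Icc 0 1)
    · exact fun t ht => ((hderiv t ht).continuousAt).continuousWithinAt
    · intro t ht
      rw [interior_Icc] at ht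
      exact ((hderiv t (Set.Ioo_subset_Icc_self ht)).differentiableAt).differentiableWithinAt
    · intro t ht
      rw [interior_Icc] at ht
      rw [(hderiv t (Set.Ioo_subset_Icc_self ht)).deriv]
      have ht0 : 0 ≤ t := ht.1.le
      have hbound : ⟪h' (x₁ + t • d) - h' x₁, d⟫ ≤ Ltilde * ‖d‖ ^ (1 + ν) * t ^ ν := by
        calc ⟪h' (x₁ + t • d) - h' x₁, d⟫ ≤ ‖h' (x₁ + t • d) - h' x₁‖ * ‖d‖ :=
              real_inner_le_norm _ _
          _ ≤ Ltilde * ‖(x₁ + t • d) - x₁‖ ^ ν * ‖d‖ := by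
              apply mul_le_mul_of_nonneg_right _ (norm_nonneg d)
              exact hHolder _ (hmem t (Set.Ioo_subset_Icc_self ht)) _ hx₁
          _ = Ltilde * ‖d‖ ^ (1 + ν) * t ^ ν := by
              rw [add_sub_cancel_left, norm_smul, Real.norm_eq_abs, abs_of_nonneg ht0,
                Real.mul_rpow ht0 (norm_nonneg d)]
              rw [Real.rpow_add hdn, Real.rpow_one]
              ring
      linarith
  have hφ10 : φ 1 ≤ φ 0 := hanti (Set.left_mem_Icc.mpr zero_le_one)
    (Set.right_mem_Icc.mpr zero_le_one) zero_le_one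
  have hφ0 : φ 0 = h x₁ := by
    simp [hφ, Real.zero_rpow (ne_of_gt h1ν)]
  have hφ1 : φ 1 = h x₂ - ⟪h' x₁, d⟫ - Ltilde * ‖d‖ ^ (1 + ν) / (1 + ν) := by
    simp [hφ, hddef]
  rw [hφ0, hφ1] at hφ10
  have hsc := aux_scalar hν0 hν1 hL hδ (norm_nonneg d)
  rw [← hLdef] at hsc
  linarith [hsc]
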